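/- Conversely to the previous fact, in the polynomial jet algebra: if f is a polynomial in x, u_0, ..., u_n with δf/δu = 0, then there exists a polynomial local function g with f = D_x(g) + c(x) for some function c(x) of x alone (equivalently, f minus its part depending on x alone is a total x-derivative). -/

import Mathlib

noncomputable section

open MvPolynomial

/-- The total `x`-derivative on the polynomial jet algebra `ℝ[x, u₀, u₁, ...]`,
where variable `0` represents `x` and variable `j+1` represents the jet variable
`u_j`; it is determined by `D_x(x) = 1` and `D_x(u_j) = u_{j+1}`. -/
def DxX : Derivation ℝ (MvPolynomial ℕ ℝ) (MvPolynomial ℕ ℝ) :=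
  MvPolynomial.mkDerivation ℝ fun i => if i = 0 then 1 else X (i + 1)

def wj : ℕ → ℕ := fun i => if i = 0 then 0 else 1

lemma weight_sub_single {i : ℕ} {s : ℕ →₀ ℕ} (hi : i ∈ s.support) :
    Finsupp.weight wj (s - Finsupp.single i 1) + wj i = Finsupp.weight wj s := by
  have hle : Finsupp.single i 1 ≤ s := by
    rw [Finsupp.single_le_iff]
    have := Finsupp.mem_support_iff.mp hi; omega
  conv_rhs => rw [← add_tsub_cancel_of_le hle]
  rw [map_add, add_comm]
  congr 1
  rw [Finsupp.weight_apply, Finsupp.sum_single_index] <;> simp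

lemma isWH_nsmul (k : ℕ) {p : MvPolynomial ℕ ℝ} {m : ℕ}
    (hp : IsWeightedHomogeneous wj p m) : IsWeightedHomogeneous wj (k • p) m := by
  intro d hd
  apply hp
  intro h
  exact hd (by rw [coeff_smul, h, smul_zero])

lemma isWH_DxX {p : MvPolynomial ℕ ℝ} {m : ℕ} (hp : IsWeightedHomogeneous wj p m) :
    IsWeightedHomogeneous wj (DxX p) m := by
  conv_lhs => rw [p.as_sum]
  rw [map_sum]
  apply IsWeightedHomogeneous.sum
  intro s hs
  have hws : Finsupp.weight wj s = m := hp (mem_support_iff.mp hs)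
  rw [DxX, mkDerivation_monomial]
  have : IsWeightedHomogeneous wj
      (Finsupp.sum s fun i k => monomial (s - Finsupp.single i 1) (k : ℝ) •
        (if i = 0 then 1 else X (i + 1) : MvPolynomial ℕ ℝ)) m := by
    apply IsWeightedHomogeneous.sum
    intro i hi
    dsimp only
    rw [smul_eq_mul]
    rw [← hws, ← weight_sub_single hi]
    apply IsWeightedHomogeneous.mul
    · exact isWeightedHomogeneous_monomial _ _ _ rfl
    · by_cases h : i = 0
      · simpa [h, wj] using isWeightedHomogeneous_one (R := ℝ) wj
      · have := isWeightedHomogeneous_X (R := ℝ) wj (i + 1)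
        simpa [h, wj] using this
  intro d hd
  apply this
  intro h
  exact hd (by rw [coeff_smul, h, smul_zero])

lemma X_mul_pderiv_monomial (i : ℕ) (s : ℕ →₀ ℕ) (a : ℝ) :
    X i * pderiv i (monomial s a) = (s i) • monomial s a := by
  rw [pderiv_monomial]
  by_cases h : s i = 0
  · simp [h]
  · have hle : Finsupp.single i 1 ≤ s := by
      rw [Finsupp.single_le_iff]; omega
    rw [X, monomial_mul, one_mul, add_tsub_cancel_of_le hle, smul_monomial]
    congr 1
    push_cast
    ring

lemma isWH_X_mul_pderiv (i : ℕ) {p : MvPolynomial ℕ ℝ} {m : ℕ}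
    (hp : IsWeightedHomogeneous wj p m) :
    IsWeightedHomogeneous wj (X i * pderiv i p) m := by
  conv_lhs => rw [p.as_sum, map_sum, Finset.mul_sum]
  apply IsWeightedHomogeneous.sum
  intro s hs
  rw [X_mul_pderiv_monomial]
  exact isWH_nsmul _ (isWeightedHomogeneous_monomial _ _ _ (hp (mem_support_iff.mp hs)))

lemma weight_eq_sum_range {n : ℕ} (s : ℕ →₀ ℕ) (hs : ∀ i ∈ s.support, i ≤ n + 1) :
    ∑ j ∈ Finset.range (n + 1), s (j + 1) = Finsupp.weight wj s := by
  have h1 : Finsupp.weight wj s = ∑ i ∈ s.support, s i * wj i := by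
    rw [Finsupp.weight_apply, Finsupp.sum]
    simp [mul_comm]
  have h2 : ∑ i ∈ s.support, s i * wj i = ∑ i ∈ Finset.range (n + 2), s i * wj i := by
    apply Finset.sum_subset
    · intro i hi
      exact Finset.mem_range.mpr (by have := hs i hi; omega)
    · intro i _ hi
      rw [Finsupp.notMem_support_iff.mp hi, zero_mul]
  rw [h1, h2, Finset.sum_range_succ' (fun i => s i * wj i) (n + 1)]
  simp [wj]

lemma euler_identity {n : ℕ} {p : MvPolynomial ℕ ℝ} (hv : ∀ i ∈ p.vars, i ≤ n + 1)
    {d : ℕ} (hp : IsWeightedHomogeneous wj p d) :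
    ∑ j ∈ Finset.range (n + 1), X (j + 1) * pderiv (j + 1) p = (d : ℝ) • p := by
  conv_lhs => rw [p.as_sum]
  have : ∀ j ∈ Finset.range (n + 1),
      X (j + 1) * pderiv (j + 1) (∑ s ∈ p.support, monomial s (coeff s p)) =
      ∑ s ∈ p.support, (s (j + 1)) • monomial s (coeff s p) := by
    intro j _
    rw [map_sum, Finset.mul_sum]
    exact Finset.sum_congr rfl fun s _ => X_mul_pderiv_monomial _ _ _
  rw [Finset.sum_congr rfl this, Finset.sum_comm]
  conv_rhs => rw [p.as_sum, Finset.smul_sum]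
  apply Finset.sum_congr rfl
  intro s hs
  rw [← Finset.sum_smul, weight_eq_sum_range s
    (fun i hi => hv i ((mem_vars i).mpr ⟨s, hs, hi⟩)),
    hp (mem_support_iff.mp hs), ← Nat.cast_smul_eq_nsmul ℝ]

lemma comp_comm (T : MvPolynomial ℕ ℝ →ₗ[ℝ] MvPolynomial ℕ ℝ)
    (hT : ∀ (m : ℕ) (p : MvPolynomial ℕ ℝ), IsWeightedHomogeneous wj p m →
      IsWeightedHomogeneous wj (T p) m)
    (d : ℕ) (f : MvPolynomial ℕ ℝ) :
    weightedHomogeneousComponent wj d (T f) = T (weightedHomogeneousComponent wj d f) := by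
  have hfin : (Function.support fun m => weightedHomogeneousComponent wj m f).Finite :=
    weightedHomogeneousComponent_finsupp f
  have h1 : T (∑ᶠ m, weightedHomogeneousComponent wj m f) =
      ∑ᶠ m, T (weightedHomogeneousComponent wj m f) := T.toAddMonoidHom.map_finsum hfin
  conv_lhs => rw [← sum_weightedHomogeneousComponent wj f]
  rw [h1]
  have hfin2 : (Function.support fun m => T (weightedHomogeneousComponent wj m f)).Finite := by
    apply hfin.subset
    intro m hm
    simp only [Function.mem_support] at hm ⊢
    intro h
    exact hm (by rw [h, map_zero])
  have h2 : weightedHomogeneousComponent wj d (∑ᶠ m, T (weightedHomogeneousComponent wj m f)) =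
      ∑ᶠ m, weightedHomogeneousComponent wj d (T (weightedHomogeneousComponent wj m f)) :=
    (weightedHomogeneousComponent wj d).toAddMonoidHom.map_finsum hfin2
  rw [h2]
  have key : ∀ m, m ≠ d →
      weightedHomogeneousComponent wj d (T (weightedHomogeneousComponent wj m f)) = 0 := by
    intro m hm
    exact IsWeightedHomogeneous.weightedHomogeneousComponent_ne d
      (hT m _ (weightedHomogeneousComponent_isWeightedHomogeneous m f)) (Ne.symm hm)
  rw [finsum_eq_single _ d key]
  exact IsWeightedHomogeneous.weightedHomogeneousComponent_same
    (hT d _ (weightedHomogeneousComponent_isWeightedHomogeneous d f))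

def Btel (j : ℕ) (P : MvPolynomial ℕ ℝ) : MvPolynomial ℕ ℝ :=
  ∑ k ∈ Finset.range j, ((-1 : ℝ) ^ k) • (X (j - k) * (fun p => DxX p)^[k] P)

lemma Btel_succ (j : ℕ) (P : MvPolynomial ℕ ℝ) :
    Btel (j + 1) P = X (j + 1) * P - Btel j (DxX P) := by
  rw [Btel, Finset.sum_range_succ']
  simp only [pow_zero, one_smul, Nat.sub_zero, Function.iterate_zero, id_eq]
  rw [sub_eq_add_neg, add_comm (X (j+1) * P)]
  congr 1
  rw [Btel, ← Finset.sum_neg_distrib]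
  apply Finset.sum_congr rfl
  intro k hk
  rw [Function.iterate_succ_apply, pow_succ]
  have : j + 1 - (k + 1) = j - k := by omega
  rw [this, mul_neg_one, neg_smul]

lemma tele (j : ℕ) (P : MvPolynomial ℕ ℝ) :
    X (j + 1) * P = ((-1 : ℝ) ^ j) • (X 1 * (fun p => DxX p)^[j] P) + DxX (Btel j P) := by
  induction j generalizing P with
  | zero => simp [Btel]
  | succ j ih =>
    have hX : DxX (X (j + 1) : MvPolynomial ℕ ℝ) = X (j + 2) := by
      rw [DxX, mkDerivation_X]; simp
    rw [Btel_succ, map_sub, Derivation.leibniz, smul_eq_mul, smul_eq_mul, hX]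
    have ihD := ih (DxX P)
    rw [← Function.iterate_succ_apply] at ihD
    rw [ihD]
    have hit : (fun p => DxX p)^[j.succ] P = (fun p => DxX p)^[1 + j] P := by
      rw [Nat.succ_eq_add_one, Nat.add_comm]
    rw [hit]
    simp only [smul_eq_C_mul, pow_succ, mul_neg_one, map_neg]
    ring

lemma star (n : ℕ) (f : MvPolynomial ℕ ℝ)
    (heuler : ∑ i ∈ Finset.range (n + 1),
      ((-1 : ℝ) ^ i) • (fun p => DxX p)^[i] (pderiv (i + 1) f) = 0) :
    ∑ j ∈ Finset.range (n + 1), X (j + 1) * pderiv (j + 1) f =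
      DxX (∑ j ∈ Finset.range (n + 1), Btel j (pderiv (j + 1) f)) := by
  have hmap : DxX (∑ j ∈ Finset.range (n + 1), Btel j (pderiv (j + 1) f)) =
      ∑ j ∈ Finset.range (n + 1), DxX (Btel j (pderiv (j + 1) f)) :=
    map_sum DxX.toLinearMap _ _
  rw [hmap]
  have h1 : ∀ j ∈ Finset.range (n + 1), X (j + 1) * pderiv (j + 1) f =
      ((-1 : ℝ) ^ j) • (X 1 * (fun p => DxX p)^[j] (pderiv (j + 1) f)) +
        DxX (Btel j (pderiv (j + 1) f)) := fun j _ => tele j _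
  rw [Finset.sum_congr rfl h1, Finset.sum_add_distrib]
  have h2 : ∑ j ∈ Finset.range (n + 1),
      ((-1 : ℝ) ^ j) • (X 1 * (fun p => DxX p)^[j] (pderiv (j + 1) f)) =
      X 1 * ∑ j ∈ Finset.range (n + 1),
        ((-1 : ℝ) ^ j) • (fun p => DxX p)^[j] (pderiv (j + 1) f) := by
    rw [Finset.mul_sum]
    exact Finset.sum_congr rfl fun j _ => (mul_smul_comm _ _ _).symm
  rw [h2, heuler, mul_zero, zero_add]

def TL (n : ℕ) : MvPolynomial ℕ ℝ →ₗ[ℝ] MvPolynomial ℕ ℝ :=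
  ∑ j ∈ Finset.range (n + 1),
    (LinearMap.mulLeft ℝ (X (j + 1))).comp (pderiv (j + 1) : Derivation ℝ _ _).toLinearMap

lemma TL_apply (n : ℕ) (p : MvPolynomial ℕ ℝ) :
    TL n p = ∑ j ∈ Finset.range (n + 1), X (j + 1) * pderiv (j + 1) p := by
  simp [TL, LinearMap.sum_apply]

lemma hTL (n : ℕ) : ∀ (m : ℕ) (p : MvPolynomial ℕ ℝ), IsWeightedHomogeneous wj p m →
    IsWeightedHomogeneous wj (TL n p) m := by
  intro m p hp
  rw [TL_apply]
  exact IsWeightedHomogeneous.sum _ _ _ fun j _ => isWH_X_mul_pderiv _ hp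

lemma vars_comp (d : ℕ) (f : MvPolynomial ℕ ℝ) {i : ℕ}
    (hi : i ∈ (weightedHomogeneousComponent wj d f).vars) : i ∈ f.vars := by
  classical
  obtain ⟨s, hs, his⟩ := (mem_vars i).mp hi
  have hc : coeff s (weightedHomogeneousComponent wj d f) ≠ 0 := mem_support_iff.mp hs
  rw [coeff_weightedHomogeneousComponent] at hc
  by_cases h : Finsupp.weight wj s = d
  · rw [if_pos h] at hc
    exact (mem_vars i).mpr ⟨s, mem_support_iff.mpr hc, his⟩
  · rw [if_neg h] at hc; exact absurd rfl hc


/-- exactness of the variational complex for polynomials in `x` and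
`u₀, ..., u_n`: if `δf/δu = 0` then `f = D_x(g) + c(x)` for a polynomial local
function `g` and a function `c` of `x` alone. -/
theorem euler_kernel_exactness_with_x (n : ℕ) (f : MvPolynomial ℕ ℝ)
    (hvars : ∀ i ∈ f.vars, i ≤ n + 1)
    (heuler : ∑ i ∈ Finset.range (n + 1),
      ((-1 : ℝ) ^ i) • (fun p => DxX p)^[i] (pderiv (i + 1) f) = 0) :
    ∃ g c : MvPolynomial ℕ ℝ, (∀ i ∈ c.vars, i = 0) ∧ f = DxX g + c := by
  classical
  set G : MvPolynomial ℕ ℝ := ∑ j ∈ Finset.range (n + 1), Btel j (pderiv (j + 1) f) with hG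
  have hstar := star n f heuler
  set F : ℕ → MvPolynomial ℕ ℝ := fun d => weightedHomogeneousComponent wj d f with hF
  have key : ∀ d : ℕ, (d : ℝ) • F d = DxX (weightedHomogeneousComponent wj d G) := by
    intro d
    have h1 : TL n (F d) = (d : ℝ) • F d := by
      rw [TL_apply]
      exact euler_identity (fun i hi => hvars i (vars_comp d f hi))
        (weightedHomogeneousComponent_isWeightedHomogeneous d f)
    have h2 : weightedHomogeneousComponent wj d (TL n f) = TL n (F d) :=
      comp_comm (TL n) (hTL n) d f
    have h3 : TL n f = DxX G := by rw [TL_apply]; exact hstar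
    have h4 : weightedHomogeneousComponent wj d (DxX G) =
        DxX (weightedHomogeneousComponent wj d G) :=
      comp_comm DxX.toLinearMap (fun m p hp => isWH_DxX hp) d G
    rw [← h1, ← h2, h3, h4]
  have hfin : (Function.support fun m => weightedHomogeneousComponent wj m f).Finite :=
    weightedHomogeneousComponent_finsupp f
  set S : Finset ℕ := insert 0 hfin.toFinset with hS
  have h0S : 0 ∈ S := Finset.mem_insert_self _ _
  have hf_sum : f = ∑ d ∈ S, F d := by
    conv_lhs => rw [← sum_weightedHomogeneousComponent wj f]
    exact finsum_eq_sum_of_support_subset _ (by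
      intro m hm
      exact Finset.mem_coe.mpr (Finset.mem_insert_of_mem (hfin.mem_toFinset.mpr hm)))
  refine ⟨∑ d ∈ S.erase 0, ((d : ℝ)⁻¹) • weightedHomogeneousComponent wj d G, F 0, ?_, ?_⟩
  · intro i hi
    by_contra h
    obtain ⟨s, hs, his⟩ := (mem_vars i).mp hi
    have hw : Finsupp.weight wj s = 0 :=
      weightedHomogeneousComponent_isWeightedHomogeneous 0 f (mem_support_iff.mp hs)
    have hle : s i ≤ Finsupp.weight wj s := Finsupp.le_weight wj (by unfold wj; simp [h]) s
    have := Finsupp.mem_support_iff.mp his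
    omega
  · have hmap : DxX (∑ d ∈ S.erase 0, ((d : ℝ)⁻¹) • weightedHomogeneousComponent wj d G) =
        ∑ d ∈ S.erase 0, DxX (((d : ℝ)⁻¹) • weightedHomogeneousComponent wj d G) :=
      map_sum DxX.toLinearMap _ _
    rw [hmap]
    have hterm : ∀ d ∈ S.erase 0,
        DxX (((d : ℝ)⁻¹) • weightedHomogeneousComponent wj d G) = F d := by
      intro d hd
      have hd0 : d ≠ 0 := Finset.ne_of_mem_erase hd
      rw [Derivation.map_smul, ← key d, smul_smul,
        inv_mul_cancel₀ (Nat.cast_ne_zero.mpr hd0), one_smul]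
    rw [Finset.sum_congr rfl hterm, Finset.sum_erase_add S F h0S]
    exact hf_sum
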